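/- Theorem 3.2: Let G be a symmetric 2×2 real matrix and F = J · G the matrix of the associated operator. If (tr F)² < 4·det F, then there exist an invertible 2×2 real matrix S and real numbers a, b with b ≠ 0 such that Sᵀ · J · S = J and Sᵀ · G · S is the matrix with rows (a, b) and (b, −a). -/

import Mathlib

open Matrix

/-- The Minkowski metric matrix `diag(1, -1)`. -/
def Jmat : Matrix (Fin 2) (Fin 2) ℝ := !![1, 0; 0, -1]

set_option maxHeartbeats 1600000 in
/-- Theorem 3.2: if `(tr F)² < 4 det F` for the associated operator `F = J * G`, then in a
suitable basis the metrics are given by `diag(1,-1)` and the matrix `(a, b; b, -a)` with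
`b ≠ 0`. -/
theorem canonical_form_complex_eigenvalues (G : Matrix (Fin 2) (Fin 2) ℝ) (hG : Gᵀ = G)
    (F : Matrix (Fin 2) (Fin 2) ℝ) (hF : F = Jmat * G)
    (h : F.trace ^ 2 < 4 * F.det) :
    ∃ S : Matrix (Fin 2) (Fin 2) ℝ, ∃ a b : ℝ, IsUnit S ∧ b ≠ 0 ∧
      Sᵀ * Jmat * S = Jmat ∧ Sᵀ * G * S = !![a, b; b, -a] := by
  set p := G 0 0 with hp
  set q := G 0 1 with hq'
  set r := G 1 1 with hr
  have h10 : G 1 0 = q := by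
    conv_lhs => rw [← hG]
    simp [Matrix.transpose_apply, hq']
  subst hF
  rw [Matrix.trace_fin_two, Matrix.det_fin_two] at h
  simp [Matrix.mul_apply, Fin.sum_univ_two, Jmat, h10] at h
  -- now h : (1*p + 0*q + (0*q + -1*r))^2 < 4 * ((1*p+0*q)*(0*q+-1*r) - ...)
  have hkey : (p + r) ^ 2 < 4 * q ^ 2 := by nlinarith [h]
  have hq0 : q ≠ 0 := by
    intro h0
    rw [h0] at hkey
    nlinarith [sq_nonneg (p + r)]
  set u : ℝ := -(p + r) / (2 * q) with hu
  have hu2 : u ^ 2 < 1 := by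
    rw [hu, div_pow, div_lt_one (by positivity)]
    nlinarith [hkey]
  have huq : u * (2 * q) = -(p + r) := by
    rw [hu]; field_simp
  clear_value u
  clear hu
  have h1u : (0:ℝ) < 1 - u ^ 2 := by linarith
  set c2 : ℝ := 1 / Real.sqrt (1 - u ^ 2) with hc2
  have hsqrt : Real.sqrt (1 - u ^ 2) > 0 := Real.sqrt_pos.mpr h1u
  have hc2pos : 0 < c2 := by positivity
  have hc2sq : c2 ^ 2 * (1 - u ^ 2) = 1 := by
    rw [hc2, div_pow, one_pow, Real.sq_sqrt h1u.le]
    field_simp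
  clear_value c2
  clear hc2
  set C : ℝ := Real.sqrt ((c2 + 1) / 2) with hC
  have hCpos : 0 < C := Real.sqrt_pos.mpr (by linarith)
  have hCsq : C ^ 2 = (c2 + 1) / 2 := Real.sq_sqrt (by linarith)
  clear_value C
  clear hC
  set Sh : ℝ := u * c2 / (2 * C) with hSh
  have h2CSh : 2 * C * Sh = u * c2 := by
    rw [hSh]; field_simp
  clear_value Sh
  clear hSh
  have hC2m1 : 2 * C ^ 2 - 1 = c2 := by rw [hCsq]; ring
  have hCSh : C ^ 2 - Sh ^ 2 = 1 := by
    have : (2 * C * Sh) ^ 2 = (u * c2) ^ 2 := by rw [h2CSh]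
    have hu2c2 : u ^ 2 * c2 ^ 2 = c2 ^ 2 - 1 := by nlinarith [hc2sq]
    nlinarith [this, hCsq]
  have hGlit : G = !![p, q; q, r] := by
    ext i j
    fin_cases i <;> fin_cases j <;> simp [hp, hq', hr, h10]
  have hST : (!![C, Sh; Sh, C] : Matrix (Fin 2) (Fin 2) ℝ)ᵀ = !![C, Sh; Sh, C] := by
    ext i j
    fin_cases i <;> fin_cases j <;> rfl
  refine ⟨!![C, Sh; Sh, C], p * C ^ 2 + 2 * q * C * Sh + r * Sh ^ 2,
    (p + r) * C * Sh + q * (C ^ 2 + Sh ^ 2), ?_, ?_, ?_, ?_⟩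
  · rw [Matrix.isUnit_iff_isUnit_det, Matrix.det_fin_two_of]
    simp only [isUnit_iff_ne_zero]
    intro hdet
    nlinarith [hCSh]
  · -- b ≠ 0
    have e : (p + r) * C * Sh + q * (C ^ 2 + Sh ^ 2)
        = (p + r) / 2 * (2 * C * Sh) + q * (2 * C ^ 2 - 1) := by
      linear_combination (-q) * hCSh
    rw [e, h2CSh, hC2m1]
    intro h0
    have h4 : c2 * (4 * q ^ 2 - (p + r) ^ 2) = 0 := by
      linear_combination (4 * q) * h0 - (p + r) * c2 * huq
    have hpos : 4 * q ^ 2 - (p + r) ^ 2 > 0 := by linarith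
    nlinarith [hc2pos]
  · -- SᵀJS = J
    rw [hST, Jmat, Matrix.mul_fin_two, Matrix.mul_fin_two]
    ext i j
    fin_cases i <;> fin_cases j <;> simp <;>
      first
        | ring1
        | linear_combination hCSh
        | linear_combination -hCSh
  · -- SᵀGS
    have hkey0 : (p + r) * (C ^ 2 + Sh ^ 2) + 4 * q * C * Sh = 0 := by
      have : C ^ 2 + Sh ^ 2 = c2 := by linarith [hC2m1, hCSh]
      rw [this]
      have h4 : 4 * q * C * Sh = 2 * q * (2 * C * Sh) := by ring
      rw [h4, h2CSh]
      linear_combination c2 * huq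
    rw [hST, hGlit, Matrix.mul_fin_two, Matrix.mul_fin_two]
    ext i j
    fin_cases i <;> fin_cases j <;> simp <;>
      first
        | ring1
        | linear_combination hkey0
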